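/- Assume c ∈ (0,1) and C0 ≥ 1 are constants such that |K_{w'}(i)| ≤ C0·binom(n,w')·(1 − 2w'/n)^i for all integers 0 ≤ w' ≤ c·n and 0 ≤ i ≤ n/2. Let C be an [n,k] linear binary code with generator matrix G and dual distance d⊥ < n/2; set t⊥ = ⌊(d⊥−1)/2⌋. Let w be an integer with 0 ≤ w ≤ c·n, ε > 0, and let Z be a random vector on F_2^n with pmf P_Z satisfying d_TV(P_{GZ}, U_k) ≤ ε. Then (1/binom(n,w))·Σ_{x : |x| = w} (2^n·P̂_Z(x))^2 ≤ |C⊥|·V_n(t⊥)/2^{n−1} + C0·n·(1 − 2w/n)^{t⊥} + 2ε. -/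

import Mathlib

open Finset Filter
open scoped Classical BigOperators Topology

abbrev BV (n : ℕ) := Fin n → ZMod 2

def wt {n : ℕ} (x : BV n) : ℕ := (Finset.univ.filter (fun i => x i ≠ 0)).card

def dotp {n : ℕ} (x y : BV n) : ZMod 2 := ∑ i, x i * y i

def IsPMF {α : Type*} [Fintype α] (P : α → ℝ) : Prop :=
  (∀ x, 0 ≤ P x) ∧ ∑ x, P x = 1

noncomputable def dTV {α : Type*} [Fintype α] (P Q : α → ℝ) : ℝ :=
  (1/2) * ∑ x, |P x - Q x|

noncomputable def unif (α : Type*) [Fintype α] : α → ℝ := fun _ => 1 / (Fintype.card α)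

noncomputable def unifOn {α : Type*} [Fintype α] (S : Set α) : α → ℝ :=
  fun x => if x ∈ S then 1 / (Nat.card S) else 0

noncomputable def conv {n : ℕ} (P Q : BV n → ℝ) : BV n → ℝ :=
  fun x => ∑ y, P y * Q (x - y)

noncomputable def FT {n : ℕ} (f : BV n → ℝ) : BV n → ℝ :=
  fun y => (1 / 2^n) * ∑ x, f x * (if dotp x y = 0 then (1:ℝ) else -1)

noncomputable def Kraw (n w i : ℕ) : ℝ :=
  ∑ j ∈ Finset.range (w+1), (-1:ℝ)^j * (Nat.choose i j) * (Nat.choose (n-i) (w-j))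

def Vball (n t : ℕ) : ℕ := ∑ j ∈ Finset.range (t+1), Nat.choose n j

noncomputable def pmfMap {m n : ℕ} (G : Matrix (Fin m) (Fin n) (ZMod 2)) (P : BV n → ℝ) :
    BV m → ℝ :=
  fun u => ∑ z ∈ Finset.univ.filter (fun z => G.mulVec z = u), P z

noncomputable def biasOf {n : ℕ} (e : BV n) (P : BV n → ℝ) : ℝ :=
  1/2 - ∑ z ∈ Finset.univ.filter (fun z => dotp e z = 1), P z

noncomputable def bitPMF {n : ℕ} (e : BV n) (P : BV n → ℝ) : ZMod 2 → ℝ :=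
  fun b => ∑ z ∈ Finset.univ.filter (fun z => dotp e z = b), P z

noncomputable def jointPMF {m n : ℕ} (G : Matrix (Fin m) (Fin n) (ZMod 2)) (e : BV n)
    (P : BV n → ℝ) : BV m × ZMod 2 → ℝ :=
  fun p => ∑ z ∈ Finset.univ.filter (fun z => G.mulVec z = p.1 ∧ dotp e z = p.2), P z

noncomputable def prodPMF {m : ℕ} (Pb : ZMod 2 → ℝ) : BV m × ZMod 2 → ℝ :=
  fun p => (1 / 2^m) * Pb p.2

def dualSet {n : ℕ} (C : Set (BV n)) : Set (BV n) := {y | ∀ c ∈ C, dotp y c = 0}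

def rowSpan {k n : ℕ} (G : Matrix (Fin k) (Fin n) (ZMod 2)) : Submodule (ZMod 2) (BV n) :=
  Submodule.span (ZMod 2) (Set.range (fun i => G i))

lemma zmod2_cases : ∀ a : ZMod 2, a = 0 ∨ a = 1 := by decide

def suppF {n : ℕ} (x : BV n) : Finset (Fin n) := Finset.univ.filter (fun i => x i ≠ 0)

def indF {n : ℕ} (A : Finset (Fin n)) : BV n := fun i => if i ∈ A then 1 else 0

lemma wt_eq_card {n : ℕ} (x : BV n) : wt x = (suppF x).card := rfl

lemma mem_suppF {n : ℕ} {x : BV n} {i : Fin n} : i ∈ suppF x ↔ x i ≠ 0 := by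
  simp [suppF]

lemma suppF_indF {n : ℕ} (A : Finset (Fin n)) : suppF (indF A) = A := by
  ext i
  by_cases h : i ∈ A <;> simp [suppF, indF, h]

lemma indF_suppF {n : ℕ} (x : BV n) : indF (suppF x) = x := by
  funext i
  rcases zmod2_cases (x i) with h | h <;> simp [indF, mem_suppF, h]

lemma indF_injOn {n : ℕ} : Function.Injective (indF (n := n)) := by
  intro A B h
  rw [← suppF_indF A, h, suppF_indF]

lemma suppF_inj {n : ℕ} : Function.Injective (suppF (n := n)) := by
  intro x y h
  rw [← indF_suppF x, h, indF_suppF]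

lemma wt_le {n : ℕ} (x : BV n) : wt x ≤ n := by
  rw [wt_eq_card]
  simpa using Finset.card_le_univ (suppF x)

lemma wt_pos_of_ne {n : ℕ} {x : BV n} (h : x ≠ 0) : 1 ≤ wt x := by
  rcases Nat.eq_zero_or_pos (wt x) with h0 | h0
  · exfalso; apply h
    have : suppF x = ∅ := Finset.card_eq_zero.mp h0
    funext i
    rcases zmod2_cases (x i) with hh | hh
    · exact hh
    · exfalso
      have : i ∈ suppF x := mem_suppF.mpr (by simp [hh])
      simp_all
  · exact h0

lemma sum_sphere {n : ℕ} (w : ℕ) (f : BV n → ℝ) :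
    ∑ x ∈ Finset.univ.filter (fun x : BV n => wt x = w), f x
      = ∑ A ∈ Finset.powersetCard w (Finset.univ : Finset (Fin n)), f (indF A) := by
  refine Finset.sum_nbij' (fun x => suppF x) (fun A => indF A) ?_ ?_ ?_ ?_ ?_
  · intro x hx
    simp only [Finset.mem_filter, Finset.mem_univ, true_and] at hx
    simp [Finset.mem_powersetCard, ← wt_eq_card, hx]
  · intro A hA
    simp only [Finset.mem_powersetCard] at hA
    simp only [Finset.mem_coe, Finset.mem_filter, Finset.mem_univ, true_and]
    rw [wt_eq_card, suppF_indF, hA.2]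
  · intro x _; exact indF_suppF x
  · intro A _; exact suppF_indF A
  · intro x _; rw [indF_suppF]

lemma card_sphere {n : ℕ} (w : ℕ) :
    (Finset.univ.filter (fun x : BV n => wt x = w)).card = n.choose w := by
  have := sum_sphere (n := n) w (fun _ => (1:ℝ))
  simp only [Finset.sum_const, nsmul_eq_mul, mul_one] at this
  have h2 : ((Finset.powersetCard w (Finset.univ : Finset (Fin n))).card : ℝ)
      = (n.choose w : ℝ) := by
    rw [Finset.card_powersetCard]; simp
  exact_mod_cast this.trans h2

lemma card_ball {n : ℕ} (t : ℕ) :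
    (Finset.univ.filter (fun x : BV n => wt x ≤ t)).card = Vball n t := by
  classical
  have : (Finset.univ.filter (fun x : BV n => wt x ≤ t))
      = (Finset.range (t+1)).biUnion (fun j => Finset.univ.filter (fun x : BV n => wt x = j)) := by
    ext x
    simp only [Finset.mem_filter, Finset.mem_univ, true_and, Finset.mem_biUnion,
      Finset.mem_range]
    constructor
    · intro h; exact ⟨wt x, by omega, rfl⟩
    · rintro ⟨j, hj, rfl⟩; omega
  rw [this, Finset.card_biUnion]
  · simp only [card_sphere]; rfl
  · intro a _ b _ hab
    simp only [Finset.disjoint_left, Finset.mem_filter]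
    rintro x ⟨_, rfl⟩ ⟨_, h⟩
    exact hab (h ▸ rfl)

lemma dotp_comm {n : ℕ} (x y : BV n) : dotp x y = dotp y x := by
  unfold dotp; exact Finset.sum_congr rfl (fun i _ => mul_comm _ _)

lemma dotp_add_left {n : ℕ} (x y z : BV n) : dotp (x + y) z = dotp x z + dotp y z := by
  unfold dotp
  rw [← Finset.sum_add_distrib]
  exact Finset.sum_congr rfl (fun i _ => by simp [add_mul])

lemma dotp_eq_card {n : ℕ} (x v : BV n) :
    dotp x v = ((suppF x ∩ suppF v).card : ZMod 2) := by
  unfold dotp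
  rw [← Finset.sum_filter_ne_zero (s := Finset.univ)]
  have hset : Finset.univ.filter (fun i => x i * v i ≠ 0) = suppF x ∩ suppF v := by
    ext i
    simp only [Finset.mem_filter, Finset.mem_univ, true_and, Finset.mem_inter, mem_suppF]
    constructor
    · intro h; exact ⟨fun h0 => h (by simp [h0]), fun h0 => h (by simp [h0])⟩
    · rintro ⟨h1, h2⟩ h
      rcases zmod2_cases (x i) with hx | hx <;> rcases zmod2_cases (v i) with hv | hv <;>
        simp_all
  rw [hset]
  have : ∀ i ∈ suppF x ∩ suppF v, x i * v i = 1 := by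
    intro i hi
    simp only [Finset.mem_inter, mem_suppF] at hi
    rcases zmod2_cases (x i) with hx | hx <;> rcases zmod2_cases (v i) with hv | hv <;>
      simp_all
  rw [Finset.sum_congr rfl this]
  simp

lemma chi_eq {n : ℕ} (x v : BV n) :
    (if dotp x v = 0 then (1:ℝ) else -1) = (-1 : ℝ)^((suppF x ∩ suppF v).card) := by
  rw [dotp_eq_card]
  rcases Nat.even_or_odd ((suppF x ∩ suppF v).card) with h | h
  · rw [if_pos, h.neg_one_pow]
    exact (ZMod.natCast_eq_zero_iff _ 2).mpr h.two_dvd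
  · rw [if_neg, h.neg_one_pow]
    intro hc
    have := (ZMod.natCast_eq_zero_iff _ 2).mp hc
    exact (Nat.not_even_iff_odd.mpr h) (even_iff_two_dvd.mpr this)

lemma count_inter {n : ℕ} (S : Finset (Fin n)) (w j : ℕ) (hj : j ≤ w) :
    ((Finset.powersetCard w (Finset.univ : Finset (Fin n))).filter
        (fun A => (A ∩ S).card = j)).card
      = S.card.choose j * (Fintype.card (Fin n) - S.card).choose (w - j) := by
  classical
  have hcard : ((Finset.powersetCard j S) ×ˢ (Finset.powersetCard (w - j) Sᶜ)).card
      = S.card.choose j * (Fintype.card (Fin n) - S.card).choose (w - j) := by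
    rw [Finset.card_product, Finset.card_powersetCard, Finset.card_powersetCard,
      Finset.card_compl]
  rw [← hcard]
  apply Finset.card_nbij' (fun A => (A ∩ S, A \ S)) (fun p => p.1 ∪ p.2)
  · intro A hA
    simp only [Finset.mem_coe, Finset.mem_filter, Finset.mem_powersetCard] at hA
    obtain ⟨⟨_, hAw⟩, hAj⟩ := hA
    simp only [Finset.mem_coe, Finset.mem_product, Finset.mem_powersetCard]
    refine ⟨⟨Finset.inter_subset_right, hAj⟩, ⟨fun i hi => ?_, ?_⟩⟩
    · simp only [Finset.mem_sdiff] at hi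
      simp [Finset.mem_compl, hi.2]
    · have := Finset.card_inter_add_card_sdiff A S
      omega
  · intro p hp
    simp only [Finset.mem_coe, Finset.mem_product, Finset.mem_powersetCard] at hp
    obtain ⟨⟨hBS, hBj⟩, hCS, hCj⟩ := hp
    have hdisj : Disjoint p.1 p.2 := by
      refine Finset.disjoint_left.mpr (fun i hi1 hi2 => ?_)
      have := hCS hi2
      simp only [Finset.mem_compl] at this
      exact this (hBS hi1)
    have hint : (p.1 ∪ p.2) ∩ S = p.1 := by
      rw [Finset.union_inter_distrib_right]
      have h1 : p.1 ∩ S = p.1 := Finset.inter_eq_left.mpr hBS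
      have h2 : p.2 ∩ S = ∅ := by
        refine Finset.eq_empty_of_forall_notMem (fun i hi => ?_)
        simp only [Finset.mem_inter] at hi
        have := hCS hi.1
        simp only [Finset.mem_compl] at this
        exact this hi.2
      rw [h1, h2, Finset.union_empty]
    simp only [Finset.mem_coe, Finset.mem_filter, Finset.mem_powersetCard]
    refine ⟨⟨Finset.subset_univ _, ?_⟩, by rw [hint, hBj]⟩
    rw [Finset.card_union_of_disjoint hdisj, hBj, hCj]
    omega
  · intro A hA
    dsimp only
    rw [Finset.union_comm]
    exact Finset.sdiff_union_inter A S
  · intro p hp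
    simp only [Finset.mem_coe, Finset.mem_product, Finset.mem_powersetCard] at hp
    obtain ⟨⟨hBS, hBj⟩, hCS, hCj⟩ := hp
    have hint : (p.1 ∪ p.2) ∩ S = p.1 := by
      rw [Finset.union_inter_distrib_right]
      have h1 : p.1 ∩ S = p.1 := Finset.inter_eq_left.mpr hBS
      have h2 : p.2 ∩ S = ∅ := by
        refine Finset.eq_empty_of_forall_notMem (fun i hi => ?_)
        simp only [Finset.mem_inter] at hi
        have := hCS hi.1
        simp only [Finset.mem_compl] at this
        exact this hi.2
      rw [h1, h2, Finset.union_empty]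
    have hsd : (p.1 ∪ p.2) \ S = p.2 := by
      rw [Finset.union_sdiff_distrib]
      have h1 : p.1 \ S = ∅ := Finset.sdiff_eq_empty_iff_subset.mpr hBS
      have h2 : p.2 \ S = p.2 := by
        refine Finset.sdiff_eq_self_iff_disjoint.mpr (Finset.disjoint_left.mpr ?_)
        intro i hi2 hiS
        have := hCS hi2
        simp only [Finset.mem_compl] at this
        exact this hiS
      rw [h1, h2, Finset.empty_union]
    dsimp only
    rw [hint, hsd]

lemma kraw_sum {n : ℕ} (w : ℕ) (v : BV n) :
    ∑ x ∈ Finset.univ.filter (fun x : BV n => wt x = w),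
        (if dotp x v = 0 then (1:ℝ) else -1)
      = Kraw n w (wt v) := by
  classical
  have h1 : ∑ x ∈ Finset.univ.filter (fun x : BV n => wt x = w),
      (if dotp x v = 0 then (1:ℝ) else -1)
      = ∑ A ∈ Finset.powersetCard w (Finset.univ : Finset (Fin n)),
          (-1:ℝ)^((A ∩ suppF v).card) := by
    rw [sum_sphere w (fun x => if dotp x v = 0 then (1:ℝ) else -1)]
    refine Finset.sum_congr rfl (fun A _ => ?_)
    rw [chi_eq, suppF_indF]
  rw [h1]
  have hmaps : ∀ A ∈ Finset.powersetCard w (Finset.univ : Finset (Fin n)),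
      (A ∩ suppF v).card ∈ Finset.range (w+1) := by
    intro A hA
    simp only [Finset.mem_powersetCard] at hA
    have : (A ∩ suppF v).card ≤ A.card := Finset.card_le_card Finset.inter_subset_left
    simp only [Finset.mem_range]
    omega
  rw [← Finset.sum_fiberwise_of_maps_to hmaps]
  unfold Kraw
  refine Finset.sum_congr rfl (fun j hj => ?_)
  simp only [Finset.mem_range] at hj
  have hjw : j ≤ w := by omega
  have hconst : ∑ A ∈ (Finset.powersetCard w (Finset.univ : Finset (Fin n))).filter
      (fun A => (A ∩ suppF v).card = j), (-1:ℝ)^((A ∩ suppF v).card)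
      = ∑ A ∈ (Finset.powersetCard w (Finset.univ : Finset (Fin n))).filter
      (fun A => (A ∩ suppF v).card = j), (-1:ℝ)^j := by
    refine Finset.sum_congr rfl (fun A hA => ?_)
    simp only [Finset.mem_filter] at hA
    rw [hA.2]
  rw [hconst, Finset.sum_const, count_inter (suppF v) w j hjw]
  simp only [wt_eq_card, Fintype.card_fin, nsmul_eq_mul]
  push_cast
  ring

lemma exists_wt {n : ℕ} (i : ℕ) (hi : i ≤ n) : ∃ v : BV n, wt v = i := by
  obtain ⟨A, -, hA⟩ := Finset.exists_subset_card_eq (s := (Finset.univ : Finset (Fin n))) (n := i)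
    (by simpa using hi)
  exact ⟨indF A, by rw [wt_eq_card, suppF_indF, hA]⟩

lemma kraw_abs {n : ℕ} (w i : ℕ) (hi : i ≤ n) : |Kraw n w i| ≤ (n.choose w : ℝ) := by
  obtain ⟨v, rfl⟩ := exists_wt i hi
  rw [← kraw_sum w v]
  refine (Finset.abs_sum_le_sum_abs _ _).trans ?_
  have : ∀ x ∈ Finset.univ.filter (fun x : BV n => wt x = w),
      |if dotp x v = 0 then (1:ℝ) else -1| = 1 := by
    intro x _; split <;> simp
  rw [Finset.sum_congr rfl this, Finset.sum_const, card_sphere]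
  simp

def allOnes (n : ℕ) : BV n := fun _ => 1

lemma suppF_add_ones {n : ℕ} (v : BV n) : suppF (v + allOnes n) = (suppF v)ᶜ := by
  ext i
  rcases zmod2_cases (v i) with h | h <;>
    simp [mem_suppF, Finset.mem_compl, allOnes, h]
  · decide

lemma wt_add_ones {n : ℕ} (v : BV n) : wt (v + allOnes n) = n - wt v := by
  rw [wt_eq_card, suppF_add_ones, Finset.card_compl, wt_eq_card]
  simp

lemma dotp_ones {n : ℕ} (x : BV n) : dotp x (allOnes n) = ((wt x : ℕ) : ZMod 2) := by
  rw [dotp_eq_card]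
  congr 1
  rw [wt_eq_card]
  congr 1
  ext i
  simp [mem_suppF, allOnes]

lemma kraw_symm {n : ℕ} (w i : ℕ) (hi : i ≤ n) :
    |Kraw n w (n - i)| = |Kraw n w i| := by
  obtain ⟨v, rfl⟩ := exists_wt i hi
  have h1 : Kraw n w (n - wt v) = Kraw n w (wt (v + allOnes n)) := by rw [wt_add_ones]
  rw [h1, ← kraw_sum w (v + allOnes n), ← kraw_sum w v]
  have hsplit : ∀ x ∈ Finset.univ.filter (fun x : BV n => wt x = w),
      (if dotp x (v + allOnes n) = 0 then (1:ℝ) else -1)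
        = (-1:ℝ)^w * (if dotp x v = 0 then (1:ℝ) else -1) := by
    intro x hx
    simp only [Finset.mem_filter] at hx
    have hd : dotp x (v + allOnes n) = dotp x v + ((w : ℕ) : ZMod 2) := by
      rw [dotp_comm, dotp_add_left, dotp_comm v x, dotp_comm (allOnes n) x, dotp_ones, hx.2]
    rw [hd]
    rcases Nat.even_or_odd w with hw | hw
    · have : ((w : ℕ) : ZMod 2) = 0 := (ZMod.natCast_eq_zero_iff _ 2).mpr hw.two_dvd
      rw [this, add_zero, hw.neg_one_pow, one_mul]
    · have h2 : ((w : ℕ) : ZMod 2) = 1 := by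
        have hmod := Nat.odd_iff.mp hw
        rw [← ZMod.natCast_mod w 2, hmod, Nat.cast_one]
      rw [h2]
      have e1 : (0 + 1 : ZMod 2) ≠ 0 := by decide
      have e2 : (1 + 1 : ZMod 2) = 0 := by decide
      rcases zmod2_cases (dotp x v) with h | h <;> rw [h] <;>
        simp [hw.neg_one_pow, e1, e2]
  rw [Finset.sum_congr rfl hsplit, ← Finset.mul_sum, abs_mul, abs_pow, abs_neg, abs_one,
    one_pow, one_mul]

lemma tv_event {α : Type*} [Fintype α] (Q : α → ℝ) (hQ1 : ∑ x, Q x = 1)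
    (hcard : 0 < Fintype.card α) (A : Finset α) {ε : ℝ}
    (hT : dTV Q (unif α) ≤ ε) :
    ∑ x ∈ A, Q x ≤ (A.card : ℝ) / (Fintype.card α) + ε := by
  classical
  set U := unif α with hU
  have hUx : ∀ x, U x = 1 / (Fintype.card α) := fun x => rfl
  have hUA : ∑ x ∈ A, U x = (A.card : ℝ) / (Fintype.card α) := by
    simp [hUx, Finset.sum_const, div_eq_mul_inv]
  have hUall : ∑ x, U x = 1 := by
    simp only [hUx, Finset.sum_const, Finset.card_univ, nsmul_eq_mul]
    field_simp
  have hsum : ∑ x ∈ A, (Q x - U x) + ∑ x ∈ Aᶜ, (Q x - U x) = 0 := by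
    rw [Finset.sum_add_sum_compl]
    rw [Finset.sum_sub_distrib, hQ1, hUall]
    ring
  have b1 : ∑ x ∈ A, (Q x - U x) ≤ ∑ x ∈ A, |Q x - U x| :=
    Finset.sum_le_sum (fun x _ => le_abs_self _)
  have b2 : -(∑ x ∈ Aᶜ, (Q x - U x)) ≤ ∑ x ∈ Aᶜ, |Q x - U x| := by
    rw [← Finset.sum_neg_distrib]
    exact Finset.sum_le_sum (fun x _ => neg_le_abs _)
  have habs : ∑ x ∈ A, |Q x - U x| + ∑ x ∈ Aᶜ, |Q x - U x| = ∑ x, |Q x - U x| :=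
    Finset.sum_add_sum_compl A _
  have hdtv : ∑ x, |Q x - U x| ≤ 2 * ε := by
    have : dTV Q U ≤ ε := hT
    unfold dTV at this
    linarith
  have key : ∑ x ∈ A, (Q x - U x) ≤ ε := by linarith
  have : ∑ x ∈ A, Q x = ∑ x ∈ A, U x + ∑ x ∈ A, (Q x - U x) := by
    rw [← Finset.sum_add_distrib]
    exact Finset.sum_congr rfl (fun x _ => by ring)
  rw [this, hUA]
  linarith

lemma sum_fiber {k n : ℕ} (G : Matrix (Fin k) (Fin n) (ZMod 2)) (P : BV n → ℝ)
    (g : BV k → ℝ) :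
    ∑ u : BV k, pmfMap G P u * g u = ∑ z : BV n, P z * g (G.mulVec z) := by
  classical
  unfold pmfMap
  rw [← Finset.sum_fiberwise_of_maps_to (g := fun z : BV n => G.mulVec z)
    (t := Finset.univ) (fun z _ => Finset.mem_univ _) (f := fun z => P z * g (G.mulVec z))]
  refine Finset.sum_congr rfl (fun u _ => ?_)
  rw [Finset.sum_mul]
  refine Finset.sum_congr rfl (fun z hz => ?_)
  simp only [Finset.mem_filter] at hz
  rw [hz.2]

lemma pmfMap_sum_one {k n : ℕ} (G : Matrix (Fin k) (Fin n) (ZMod 2)) (P : BV n → ℝ)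
    (hP1 : ∑ z, P z = 1) : ∑ u, pmfMap G P u = 1 := by
  have := sum_fiber G P (fun _ => (1:ℝ))
  simpa [hP1] using this

lemma bv_add_self {n : ℕ} (v : BV n) : v + v = 0 := by
  funext i
  rcases zmod2_cases (v i) with h | h <;> simp [h]
  decide

lemma card_shift_ball {n : ℕ} (t : ℕ) (a : BV n) :
    (Finset.univ.filter (fun v : BV n => wt (v + a) ≤ t)).card = Vball n t := by
  rw [← card_ball (n := n) t]
  apply Finset.card_nbij' (fun v => v + a) (fun u => u + a)
  · intro v hv
    simp only [Finset.mem_coe, Finset.mem_filter, Finset.mem_univ, true_and] at hv ⊢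
    exact hv
  · intro u hu
    simp only [Finset.mem_coe, Finset.mem_filter, Finset.mem_univ, true_and] at hu ⊢
    rwa [add_assoc, bv_add_self, add_zero]
  · intro v _
    dsimp only
    rw [add_assoc, bv_add_self, add_zero]
  · intro u _
    dsimp only
    rw [add_assoc, bv_add_self, add_zero]

lemma lemD {n k : ℕ} (G : Matrix (Fin k) (Fin n) (ZMod 2)) (P : BV n → ℝ)
    (hP0 : ∀ z, 0 ≤ P z) (hP1 : ∑ z, P z = 1) {ε : ℝ}
    (ht : dTV (pmfMap G P) (unif (BV k)) ≤ ε) (t : ℕ) (a : BV n) :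
    ∑ z : BV n, ∑ z' : BV n, P z * P z' * (if wt (z + z' + a) ≤ t then (1:ℝ) else 0)
      ≤ (Vball n t : ℝ) / 2^k + ε := by
  classical
  set Q := pmfMap G P with hQ
  set T : Finset (BV k) :=
    (Finset.univ.filter (fun v : BV n => wt (v + a) ≤ t)).image (fun v => G.mulVec v) with hT
  have hTcard : (T.card : ℝ) ≤ (Vball n t : ℝ) := by
    have := Finset.card_image_le (s := Finset.univ.filter (fun v : BV n => wt (v + a) ≤ t))
      (f := fun v => G.mulVec v)
    rw [card_shift_ball] at this
    exact_mod_cast this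
  have hcardBV : (Fintype.card (BV k) : ℝ) = 2^k := by
    simp [Fintype.card_fun, ZMod.card]
  have hcardpos : 0 < Fintype.card (BV k) := Fintype.card_pos
  -- pointwise step
  have step1 : ∀ z z' : BV n,
      P z * P z' * (if wt (z + z' + a) ≤ t then (1:ℝ) else 0)
        ≤ P z * P z' * (if G.mulVec z + G.mulVec z' ∈ T then (1:ℝ) else 0) := by
    intro z z'
    by_cases h : wt (z + z' + a) ≤ t
    · have hmem : G.mulVec z + G.mulVec z' ∈ T := by
        rw [hT]
        refine Finset.mem_image.mpr ⟨z + z', ?_, ?_⟩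
        · simp only [Finset.mem_filter, Finset.mem_univ, true_and]
          exact h
        · rw [Matrix.mulVec_add]
      rw [if_pos h, if_pos hmem]
    · rw [if_neg h]
      have : (0:ℝ) ≤ P z * P z' * (if G.mulVec z + G.mulVec z' ∈ T then (1:ℝ) else 0) := by
        apply mul_nonneg (mul_nonneg (hP0 z) (hP0 z'))
        split <;> norm_num
      simpa using this
  have inner_bound : ∀ z : BV n,
      ∑ z' : BV n, P z' * (if G.mulVec z + G.mulVec z' ∈ T then (1:ℝ) else 0)
        ≤ (Vball n t : ℝ) / 2^k + ε := by
    intro z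
    have hfib := sum_fiber G P (fun u' => if G.mulVec z + u' ∈ T then (1:ℝ) else 0)
    rw [← hfib]
    have hfilter : ∑ u' : BV k, Q u' * (if G.mulVec z + u' ∈ T then (1:ℝ) else 0)
        = ∑ u' ∈ Finset.univ.filter (fun u' => G.mulVec z + u' ∈ T), Q u' := by
      rw [Finset.sum_filter]
      refine Finset.sum_congr rfl (fun u' _ => ?_)
      split <;> simp
    rw [hfilter]
    have hcardA : (Finset.univ.filter (fun u' => G.mulVec z + u' ∈ T)).card = T.card := by
      have himg : Finset.univ.filter (fun u' => G.mulVec z + u' ∈ T)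
          = T.image (fun s => G.mulVec z + s) := by
        ext u'
        simp only [Finset.mem_filter, Finset.mem_univ, true_and, Finset.mem_image]
        constructor
        · intro h
          exact ⟨G.mulVec z + u', h, by rw [← add_assoc, bv_add_self, zero_add]⟩
        · rintro ⟨s, hs, rfl⟩
          rwa [← add_assoc, bv_add_self, zero_add]
      rw [himg, Finset.card_image_of_injective _ (add_right_injective _)]
    have := tv_event Q (pmfMap_sum_one G P hP1) hcardpos
      (Finset.univ.filter (fun u' => G.mulVec z + u' ∈ T)) ht
    rw [hcardA, hcardBV] at this
    refine this.trans ?_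
    have : (T.card : ℝ) / 2^k ≤ (Vball n t : ℝ) / 2^k := by
      gcongr

    linarith
  calc ∑ z : BV n, ∑ z' : BV n, P z * P z' * (if wt (z + z' + a) ≤ t then (1:ℝ) else 0)
      ≤ ∑ z : BV n, ∑ z' : BV n,
          P z * P z' * (if G.mulVec z + G.mulVec z' ∈ T then (1:ℝ) else 0) := by
        exact Finset.sum_le_sum (fun z _ => Finset.sum_le_sum (fun z' _ => step1 z z'))
    _ = ∑ z : BV n, P z * ∑ z' : BV n,
          P z' * (if G.mulVec z + G.mulVec z' ∈ T then (1:ℝ) else 0) := by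
        refine Finset.sum_congr rfl (fun z _ => ?_)
        rw [Finset.mul_sum]
        exact Finset.sum_congr rfl (fun z' _ => by ring)
    _ ≤ ∑ z : BV n, P z * ((Vball n t : ℝ) / 2^k + ε) := by
        exact Finset.sum_le_sum (fun z _ =>
          mul_le_mul_of_nonneg_left (inner_bound z) (hP0 z))
    _ = (Vball n t : ℝ) / 2^k + ε := by
        rw [← Finset.sum_mul, hP1, one_mul]

lemma dual_card_ge {n k : ℕ} (G : Matrix (Fin k) (Fin n) (ZMod 2)) (hrank : G.rank = k) :
    2^(n-k) ≤ Nat.card (dualSet ((rowSpan G : Submodule (ZMod 2) (BV n)) : Set (BV n))) := by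
  classical
  set L := G.mulVecLin with hL
  have hsub : (LinearMap.ker L : Set (BV n)) ⊆
      dualSet ((rowSpan G : Submodule (ZMod 2) (BV n)) : Set (BV n)) := by
    intro y hy
    have hy0 : G.mulVec y = 0 := hy
    intro c hc
    have hc' : c ∈ Submodule.span (ZMod 2) (Set.range (fun i => G i)) := hc
    clear hc
    induction hc' using Submodule.span_induction with
    | mem c hcm =>
      obtain ⟨i, rfl⟩ := hcm
      have : dotp y (G i) = (G.mulVec y) i := by
        unfold dotp Matrix.mulVec
        simp [dotProduct]
        exact Finset.sum_congr rfl (fun j _ => mul_comm _ _)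
      rw [this, hy0]
      rfl
    | zero => simp [dotp]
    | add c c' _ _ h1 h2 =>
      rw [dotp_comm, dotp_add_left, dotp_comm c y, dotp_comm c' y, h1, h2, add_zero]
    | smul a c _ hc1 =>
      rcases zmod2_cases a with h | h
      · simp [h, dotp]
      · simpa [h] using hc1
  have hker : Nat.card (LinearMap.ker L : Set (BV n)) = 2^(n-k) := by
    have hfr : Module.finrank (ZMod 2) (LinearMap.ker L) = n - k := by
      have h1 := LinearMap.finrank_range_add_finrank_ker L
      have h2 : Module.finrank (ZMod 2) (Fin n → ZMod 2) = n := by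
        simp [Module.finrank_pi]
      have h3 : Module.finrank (ZMod 2) (LinearMap.range L) = k := by
        have : G.rank = Module.finrank (ZMod 2) (LinearMap.range L) := rfl
        omega
      omega
    have hcard : Nat.card (LinearMap.ker L) = 2^(n-k) := by
      have := Module.card_eq_pow_finrank (K := ZMod 2) (V := LinearMap.ker L)
      rw [Nat.card_eq_fintype_card, this, hfr, ZMod.card]
    simpa using hcard
  calc (2:ℕ)^(n-k) = Nat.card (LinearMap.ker L : Set (BV n)) := hker.symm
    _ ≤ _ := Nat.card_mono (Set.toFinite _) hsub

lemma chi_mul {n : ℕ} (z z' x : BV n) :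
    (if dotp z x = 0 then (1:ℝ) else -1) * (if dotp z' x = 0 then (1:ℝ) else -1)
      = if dotp (z + z') x = 0 then (1:ℝ) else -1 := by
  rw [dotp_add_left]
  have e1 : (0 + 1 : ZMod 2) ≠ 0 := by decide
  have e2 : (1 + 1 : ZMod 2) = 0 := by decide
  have e3 : (1 + 0 : ZMod 2) ≠ 0 := by decide
  rcases zmod2_cases (dotp z x) with h | h <;> rcases zmod2_cases (dotp z' x) with h' | h' <;>
    rw [h, h'] <;> simp [e1, e2, e3]

set_option maxHeartbeats 2000000 in
theorem fourier_square_sum_bound (n k : ℕ) (c C0 : ℝ)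
    (hc : c ∈ Set.Ioo (0 : ℝ) 1) (hC0 : 1 ≤ C0)
    (hK : ∀ w i : ℕ, (w : ℝ) ≤ c * n → (i : ℝ) ≤ (n : ℝ) / 2 →
      |Kraw n w i| ≤ C0 * (n.choose w : ℝ) * (1 - 2 * w / n) ^ i)
    (G : Matrix (Fin k) (Fin n) (ZMod 2)) (hrank : G.rank = k)
    (dperp : ℕ)
    (hdperp : IsLeast
      {m : ℕ | ∃ y ∈ dualSet ((rowSpan G : Submodule (ZMod 2) (BV n)) : Set (BV n)),
        y ≠ 0 ∧ wt y = m} dperp)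
    (hdn : (dperp : ℝ) < (n : ℝ) / 2)
    (w : ℕ) (hw : (w : ℝ) ≤ c * n) (ε : ℝ) (hε : 0 < ε)
    (P : BV n → ℝ) (hP : IsPMF P)
    (ht : dTV (pmfMap G P) (unif (BV k)) ≤ ε) :
    (1 / (n.choose w : ℝ)) * ∑ x ∈ Finset.univ.filter (fun x : BV n => wt x = w),
        (2 ^ n * FT P x) ^ 2
      ≤ (Nat.card (dualSet ((rowSpan G : Submodule (ZMod 2) (BV n)) : Set (BV n))) : ℝ)
            * (Vball n ((dperp - 1) / 2) : ℝ) / 2 ^ (n - 1)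
        + C0 * n * (1 - 2 * w / n) ^ ((dperp - 1) / 2) + 2 * ε := by
  classical
  obtain ⟨hP0, hP1⟩ := hP
  obtain ⟨⟨y, hymem, hyne, hywt⟩, -⟩ := hdperp
  set t : ℕ := (dperp - 1) / 2 with htdef
  have hdperp1 : 1 ≤ dperp := hywt ▸ wt_pos_of_ne hyne
  have hdn' : 2 * dperp < n := by
    have : (2 * dperp : ℝ) < n := by linarith
    exact_mod_cast this
  have hn3 : 3 ≤ n := by omega
  have hnR : (0:ℝ) < n := by
    have : 0 < n := by omega
    exact_mod_cast this
  have hwlt : w < n := by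
    have : (w:ℝ) < n := lt_of_le_of_lt hw (by nlinarith [hc.2, hc.1])
    exact_mod_cast this
  have hwn : w ≤ n := hwlt.le
  have hchpos : (0:ℝ) < (n.choose w : ℝ) := by
    exact_mod_cast Nat.choose_pos hwn
  have hC0pos : (0:ℝ) < C0 := by linarith
  have hB0 : (0:ℝ) ≤ 1 - 2 * (w:ℝ) / n := by
    have h1 := hK w 1 hw (by
      rw [Nat.cast_one]
      have : (3:ℝ) ≤ n := by exact_mod_cast hn3
      linarith)
    rw [pow_one] at h1
    nlinarith [abs_nonneg (Kraw n w 1), mul_pos hC0pos hchpos]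
  have hB1 : (1 - 2 * (w:ℝ) / n) ≤ 1 := by
    have : 0 ≤ 2 * (w:ℝ) / n := by positivity
    linarith
  have hC0B : 0 ≤ C0 * (1 - 2 * (w:ℝ) / n) ^ t := by positivity
  have h2t : 2 * t + 1 ≤ dperp := by omega
  have hKb : ∀ v : BV n, Kraw n w (wt v) ≤ (n.choose w : ℝ) *
      ((if wt v ≤ t then (1:ℝ) else 0) + (if wt (v + allOnes n) ≤ t then (1:ℝ) else 0)
        + C0 * (1 - 2 * (w:ℝ) / n) ^ t) := by
    intro v
    have hv : wt v ≤ n := wt_le v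
    have habs := kraw_abs w (wt v) hv
    have hi1 : (0:ℝ) ≤ (if wt v ≤ t then (1:ℝ) else 0) := by split <;> norm_num
    have hi2 : (0:ℝ) ≤ (if wt (v + allOnes n) ≤ t then (1:ℝ) else 0) := by split <;> norm_num
    by_cases h1 : wt v ≤ t
    · rw [if_pos h1]
      have hK1 : Kraw n w (wt v) ≤ (n.choose w : ℝ) := (le_abs_self _).trans habs
      nlinarith
    · by_cases h2 : wt (v + allOnes n) ≤ t
      · rw [if_pos h2]
        have hK1 : Kraw n w (wt v) ≤ (n.choose w : ℝ) := (le_abs_self _).trans habs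
        nlinarith
      · rw [if_neg h1, if_neg h2]
        rw [wt_add_ones] at h2
        push_neg at h1 h2
        have key : |Kraw n w (wt v)| ≤ C0 * (n.choose w : ℝ) * (1 - 2 * (w:ℝ) / n) ^ t := by
          by_cases h3 : 2 * wt v ≤ n
          · have hcast : ((wt v : ℕ) : ℝ) ≤ (n:ℝ) / 2 := by
              have : ((2 * wt v : ℕ) : ℝ) ≤ (n:ℝ) := by exact_mod_cast h3
              push_cast at this
              linarith
            have hKv := hK w (wt v) hw hcast
            refine hKv.trans ?_
            have hpow : (1 - 2 * (w:ℝ) / n) ^ (wt v) ≤ (1 - 2 * (w:ℝ) / n) ^ t :=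
              pow_le_pow_of_le_one hB0 hB1 h1.le
            exact mul_le_mul_of_nonneg_left hpow (by positivity)
          · push_neg at h3
            have hni : n - (n - wt v) = wt v := by omega
            have hcast : ((n - wt v : ℕ) : ℝ) ≤ (n:ℝ) / 2 := by
              have : ((2 * (n - wt v) : ℕ) : ℝ) ≤ (n:ℝ) := by
                exact_mod_cast (by omega : 2 * (n - wt v) ≤ n)
              push_cast [Nat.sub_le] at this
              linarith
            have hsym : |Kraw n w (wt v)| = |Kraw n w (n - wt v)| := by
              conv_lhs => rw [← hni]
              exact kraw_symm w (n - wt v) (by omega)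
            rw [hsym]
            have hKi := hK w (n - wt v) hw hcast
            refine hKi.trans ?_
            have hti : t ≤ n - wt v := by omega
            have hpow : (1 - 2 * (w:ℝ) / n) ^ (n - wt v) ≤ (1 - 2 * (w:ℝ) / n) ^ t :=
              pow_le_pow_of_le_one hB0 hB1 hti
            exact mul_le_mul_of_nonneg_left hpow (by positivity)
        have h4 := (le_abs_self _).trans key
        rw [zero_add, zero_add]
        nlinarith
  -- main computation
  have hFT : ∀ x : BV n, (2:ℝ)^n * FT P x
      = ∑ z, P z * (if dotp z x = 0 then (1:ℝ) else -1) := by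
    intro x
    unfold FT
    rw [← mul_assoc]
    have h2n : (2:ℝ)^n * (1/2^n) = 1 := by
      field_simp
    rw [h2n, one_mul]
  have hsq : ∀ x : BV n, ((2:ℝ)^n * FT P x)^2
      = ∑ z : BV n, ∑ z' : BV n,
          P z * P z' * (if dotp (z + z') x = 0 then (1:ℝ) else -1) := by
    intro x
    rw [hFT x, sq, Fintype.sum_mul_sum]
    refine Finset.sum_congr rfl (fun z _ => Finset.sum_congr rfl (fun z' _ => ?_))
    rw [← chi_mul z z' x]
    ring
  have hmain : ∑ x ∈ Finset.univ.filter (fun x : BV n => wt x = w), ((2:ℝ)^n * FT P x)^2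
      = ∑ z : BV n, ∑ z' : BV n, P z * P z' * Kraw n w (wt (z + z')) := by
    rw [Finset.sum_congr rfl (fun x _ => hsq x)]
    rw [Finset.sum_comm]
    refine Finset.sum_congr rfl (fun z _ => ?_)
    rw [Finset.sum_comm]
    refine Finset.sum_congr rfl (fun z' _ => ?_)
    rw [← kraw_sum w (z + z'), Finset.mul_sum]
    refine Finset.sum_congr rfl (fun x _ => ?_)
    rw [dotp_comm (z + z') x]
  have hbound1 := lemD G P hP0 hP1 ht t 0
  have hbound2 := lemD G P hP0 hP1 ht t (allOnes n)
  simp only [add_zero] at hbound1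
  have htot : ∑ z : BV n, ∑ z' : BV n, P z * P z' = 1 := by
    rw [← Fintype.sum_mul_sum, hP1, one_mul]
  have point : ∀ z z' : BV n, P z * P z' * Kraw n w (wt (z + z'))
      ≤ (n.choose w : ℝ) * (P z * P z' * (if wt (z + z') ≤ t then (1:ℝ) else 0))
        + (n.choose w : ℝ) * (P z * P z' * (if wt (z + z' + allOnes n) ≤ t then (1:ℝ) else 0))
        + (n.choose w : ℝ) * (C0 * (1 - 2 * (w:ℝ) / n) ^ t) * (P z * P z') := by
    intro z z'
    have h := mul_le_mul_of_nonneg_left (hKb (z + z')) (mul_nonneg (hP0 z) (hP0 z'))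
    calc P z * P z' * Kraw n w (wt (z + z'))
        = (P z * P z') * Kraw n w (wt (z + z')) := by ring
      _ ≤ (P z * P z') * ((n.choose w : ℝ) *
            ((if wt (z + z') ≤ t then (1:ℝ) else 0)
              + (if wt ((z + z') + allOnes n) ≤ t then (1:ℝ) else 0)
              + C0 * (1 - 2 * (w:ℝ) / n) ^ t)) := h
      _ = _ := by ring
  have hstep : ∑ z : BV n, ∑ z' : BV n, P z * P z' * Kraw n w (wt (z + z'))
      ≤ (n.choose w : ℝ) * (((Vball n t : ℝ) / 2^k + ε) + ((Vball n t : ℝ) / 2^k + ε)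
          + C0 * (1 - 2 * (w:ℝ) / n) ^ t) := by
    refine le_trans (Finset.sum_le_sum (fun z _ => Finset.sum_le_sum
      (fun z' _ => point z z'))) ?_
    have expand : ∑ z : BV n, ∑ z' : BV n,
        ((n.choose w : ℝ) * (P z * P z' * (if wt (z + z') ≤ t then (1:ℝ) else 0))
          + (n.choose w : ℝ) * (P z * P z' * (if wt (z + z' + allOnes n) ≤ t then (1:ℝ) else 0))
          + (n.choose w : ℝ) * (C0 * (1 - 2 * (w:ℝ) / n) ^ t) * (P z * P z'))
        = (n.choose w : ℝ) * (∑ z : BV n, ∑ z' : BV n,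
              P z * P z' * (if wt (z + z') ≤ t then (1:ℝ) else 0))
          + (n.choose w : ℝ) * (∑ z : BV n, ∑ z' : BV n,
              P z * P z' * (if wt (z + z' + allOnes n) ≤ t then (1:ℝ) else 0))
          + (n.choose w : ℝ) * (C0 * (1 - 2 * (w:ℝ) / n) ^ t)
            * (∑ z : BV n, ∑ z' : BV n, P z * P z') := by
      simp only [Finset.sum_add_distrib, Finset.mul_sum]
    rw [expand, htot, mul_one]
    have c1 : (n.choose w : ℝ) * (∑ z : BV n, ∑ z' : BV n,
        P z * P z' * (if wt (z + z') ≤ t then (1:ℝ) else 0))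
        ≤ (n.choose w : ℝ) * ((Vball n t : ℝ) / 2^k + ε) :=
      mul_le_mul_of_nonneg_left hbound1 hchpos.le
    have c2 : (n.choose w : ℝ) * (∑ z : BV n, ∑ z' : BV n,
        P z * P z' * (if wt (z + z' + allOnes n) ≤ t then (1:ℝ) else 0))
        ≤ (n.choose w : ℝ) * ((Vball n t : ℝ) / 2^k + ε) :=
      mul_le_mul_of_nonneg_left hbound2 hchpos.le
    nlinarith [c1, c2]
  have hLHS : (1 / (n.choose w : ℝ)) * ∑ x ∈ Finset.univ.filter (fun x : BV n => wt x = w),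
      ((2:ℝ)^n * FT P x)^2
      ≤ (((Vball n t : ℝ) / 2^k + ε) + ((Vball n t : ℝ) / 2^k + ε)
          + C0 * (1 - 2 * (w:ℝ) / n) ^ t) := by
    rw [one_div, inv_mul_le_iff₀ hchpos, hmain]
    exact hstep
  refine le_trans hLHS ?_
  -- final arithmetic
  have hNge : (2:ℝ)^(n-k) ≤
      (Nat.card (dualSet ((rowSpan G : Submodule (ZMod 2) (BV n)) : Set (BV n))) : ℝ) := by
    exact_mod_cast dual_card_ge G hrank
  have hkn : k ≤ n := by
    have := Matrix.rank_le_width G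
    omega
  have hV0 : (0:ℝ) ≤ (Vball n t : ℝ) := by positivity
  have key1 : ((Vball n t : ℝ) / 2^k + ((Vball n t : ℝ) / 2^k))
      ≤ (Nat.card (dualSet ((rowSpan G : Submodule (ZMod 2) (BV n)) : Set (BV n))) : ℝ)
          * (Vball n t : ℝ) / 2^(n-1) := by
    have e1 : (2:ℝ)^(n-k) * (2:ℝ)^k = 2^n := by
      rw [← pow_add]; congr 1; omega
    have e2 : (2:ℝ) * (2:ℝ)^(n-1) = 2^n := by
      rw [← pow_succ']; congr 1; omega
    have hprod := mul_le_mul_of_nonneg_right hNge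
      (mul_nonneg hV0 (by positivity : (0:ℝ) ≤ (2:ℝ)^k))
    have e3 : (2:ℝ)^(n-k) * ((Vball n t : ℝ) * 2^k) = 2 * (Vball n t : ℝ) * 2^(n-1) := by
      calc (2:ℝ)^(n-k) * ((Vball n t : ℝ) * 2^k)
          = (Vball n t : ℝ) * ((2:ℝ)^(n-k) * 2^k) := by ring
        _ = (Vball n t : ℝ) * 2^n := by rw [e1]
        _ = (Vball n t : ℝ) * ((2:ℝ) * 2^(n-1)) := by rw [e2]
        _ = 2 * (Vball n t : ℝ) * 2^(n-1) := by ring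
    rw [← add_div, div_le_div_iff₀ (by positivity) (by positivity)]
    calc ((Vball n t : ℝ) + (Vball n t : ℝ)) * 2^(n-1)
        = 2 * (Vball n t : ℝ) * 2^(n-1) := by ring
      _ = (2:ℝ)^(n-k) * ((Vball n t : ℝ) * 2^k) := e3.symm
      _ ≤ (Nat.card (dualSet ((rowSpan G : Submodule (ZMod 2) (BV n)) : Set (BV n))) : ℝ)
            * ((Vball n t : ℝ) * 2^k) := hprod
      _ = (Nat.card (dualSet ((rowSpan G : Submodule (ZMod 2) (BV n)) : Set (BV n))) : ℝ)
            * (Vball n t : ℝ) * 2^k := by ring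
  have key2 : C0 * (1 - 2 * (w:ℝ) / n) ^ t ≤ C0 * n * (1 - 2 * (w:ℝ) / n) ^ t := by
    have hn1 : (1:ℝ) ≤ (n:ℝ) := by
      have : (3:ℝ) ≤ (n:ℝ) := by exact_mod_cast hn3
      linarith
    nlinarith [hC0B]
  linarith [key1, key2]
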